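/- In the modified linear multicast construction on an acyclic paths line-graph, at each step the following invariant can be maintained: for every sink t ∈ T and every set of r LG-nodes lying on the r distinct paths to t (one node per path, the most downstream processed node of each path), the r global encoding kernel vectors held by these nodes are linearly independent in F^r, provided |F| > |T|. -/

import Mathlib

/-- Auxiliary: a finite-dimensional space over `F` cannot be covered by fewer than
`|F|` proper subspaces; quantitative avoidance lemma. -/
theorem aux_exists_avoid {F M ι : Type*} [Field F] [Fintype F] [AddCommGroup M]
    [Module F M] [Finite M] (s : Finset ι) (hs : s.card < Fintype.card F)
    (p : ι → Submodule F M) (hp : ∀ t ∈ s, p t ≠ ⊤) :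
    ∃ w : M, ∀ t ∈ s, w ∉ p t := by
  by_contra h
  push_neg at h
  obtain ⟨k, hk, hfi, hle⟩ := AddSubgroup.exists_index_le_card_of_leftCoset_cover
      (H := fun t => (p t).toAddSubgroup) (g := fun _ => (0 : M)) (s := s) (by
    ext x
    simp only [Set.mem_iUnion, Set.mem_univ, iff_true, zero_vadd]
    obtain ⟨t, ht, hx⟩ := h x
    exact ⟨t, ht, ⟨x, hx, zero_vadd _ _⟩⟩)
  -- The quotient M ⧸ p k is a nontrivial F-module, so its cardinality is ≥ |F|.
  have hne : p k ≠ ⊤ := hp k hk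
  have : Nontrivial (M ⧸ p k) := Submodule.Quotient.nontrivial_iff.mpr hne
  obtain ⟨x, hx⟩ := exists_ne (0 : M ⧸ p k)
  have hinj : Function.Injective (fun c : F => c • x) := by
    intro a b hab
    by_contra hne'
    have : (a - b) • x = 0 := by simp only at hab; rw [sub_smul, hab, sub_self]
    exact hx ((smul_eq_zero.mp this).resolve_left (sub_ne_zero.mpr hne') )
  have hcard : Fintype.card F ≤ (p k).toAddSubgroup.index := by
    have hfin : Finite (M ⧸ p k) := Quotient.finite _
    have := Nat.card_le_card_of_injective _ hinj
    rw [AddSubgroup.index, ← Nat.card_eq_fintype_card]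
    exact this
  exact absurd (hcard.trans hle) (not_le.mpr hs)

theorem linear_multicast_inductive_step {F ι : Type*} [Field F] [Fintype F] [DecidableEq ι]
    (r : ℕ) (T : Finset ι) (hF : T.card < Fintype.card F)
    (W : Submodule F (Fin r → F)) (B : ι → Fin (r - 1) → Fin r → F)
    (hB : ∀ t ∈ T, LinearIndependent F (B t))
    (hW : ∀ t ∈ T, ¬ W ≤ Submodule.span F (Set.range (B t))) :
    ∃ w ∈ W, ∀ t ∈ T,
      LinearIndependent F (fun i : Option (Fin (r - 1)) => i.elim w (B t)) := by
  -- Consider, inside `W`, the preimages of the spans of the `B t`.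
  set p : ι → Submodule F W := fun t =>
    (Submodule.span F (Set.range (B t))).comap W.subtype with hp_def
  have hp : ∀ t ∈ T, p t ≠ ⊤ := by
    intro t ht htop
    apply hW t ht
    intro x hxW
    have : (⟨x, hxW⟩ : W) ∈ p t := htop ▸ Submodule.mem_top
    exact this
  obtain ⟨w, hw⟩ := aux_exists_avoid T hF p hp
  refine ⟨(w : Fin r → F), w.2, fun t ht => ?_⟩
  have hwt : (w : Fin r → F) ∉ Submodule.span F (Set.range (B t)) := hw t ht
  have := (hB t ht).option (x := (w : Fin r → F)) hwt
  convert this using 1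
  funext o
  cases o <;> rfl
  rfl
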